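/- On the domain U = {(a,b) ∈ ℝ² : a > 0 and b > 0}, let Ḡ be the scaled Kantowski–Sachs supermetric, the 2×2 symmetric matrix field Ḡ(a,b) with entries Ḡ_{11} = 0, Ḡ_{12} = Ḡ_{21} = 8ab, Ḡ_{22} = 8a². Then the vector fields ξ₁ = (−a, b), ξ₂ = (−a/(2b), 1), ξ₃ = (1/(ab), 0) are Killing fields of Ḡ, i.e. £_{ξᵢ} Ḡ = 0 on U for i = 1,2,3, and the vector field h = (a/2, 0) is a homothetic Killing field with £_h Ḡ = Ḡ on U. -/

import Mathlib

open scoped BigOperators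

/-- Partial derivative `∂f/∂q^α` of a scalar function on `ℝⁿ`. -/
noncomputable def pd {n : ℕ} (f : (Fin n → ℝ) → ℝ) (α : Fin n) (q : Fin n → ℝ) : ℝ :=
  fderiv ℝ f q (Pi.single α 1)

/-- Lie derivative `(£_ξ G)_{μν}`. -/
noncomputable def lieG {n : ℕ} (ξ : (Fin n → ℝ) → Fin n → ℝ)
    (G : (Fin n → ℝ) → Fin n → Fin n → ℝ) (q : Fin n → ℝ) (μ ν : Fin n) : ℝ :=
  ∑ α : Fin n, (ξ q α * pd (fun p => G p μ ν) α q
      + pd (fun p => ξ p α) μ q * G q α ν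
      + pd (fun p => ξ p α) ν q * G q μ α)

/-- The scaled Kantowski–Sachs supermetric, in coordinates `(q 0, q 1) = (a, b)`:
`Ḡ₁₁ = 0`, `Ḡ₁₂ = Ḡ₂₁ = 8ab`, `Ḡ₂₂ = 8a²`. -/
noncomputable def ksMetric (q : Fin 2 → ℝ) : Fin 2 → Fin 2 → ℝ :=
  ![![0, 8 * q 0 * q 1], ![8 * q 0 * q 1, 8 * (q 0) ^ 2]]

/-! ### Auxiliary derivative computations -/

noncomputable def pr (i : Fin 2) : (Fin 2 → ℝ) →L[ℝ] ℝ :=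
  ContinuousLinearMap.proj (R := ℝ) (φ := fun _ : Fin 2 => ℝ) i

lemma hasF_coord (i : Fin 2) (q : Fin 2 → ℝ) :
    HasFDerivAt (fun p : Fin 2 → ℝ => p i) (pr i) q := (pr i).hasFDerivAt

lemma pd_eq {f : (Fin 2 → ℝ) → ℝ} {q : Fin 2 → ℝ} {L : (Fin 2 → ℝ) →L[ℝ] ℝ}
    (h : HasFDerivAt f L q) (α : Fin 2) : pd f α q = L (Pi.single α 1) := by
  rw [pd, h.fderiv]

lemma pd_const (c : ℝ) (α : Fin 2) (q : Fin 2 → ℝ) :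
    pd (fun _ : Fin 2 → ℝ => c) α q = 0 := by
  rw [pd_eq (hasFDerivAt_const c q)]; simp

lemma pd_G01_0 (q : Fin 2 → ℝ) : pd (fun p : Fin 2 → ℝ => 8 * p 0 * p 1) 0 q = 8 * q 1 := by
  rw [pd_eq (f := fun p : Fin 2 → ℝ => 8 * p 0 * p 1) (((hasF_coord 0 q).const_mul 8).mul (hasF_coord 1 q))]
  simp [pr, Pi.single_apply]; ring

lemma pd_G01_1 (q : Fin 2 → ℝ) : pd (fun p : Fin 2 → ℝ => 8 * p 0 * p 1) 1 q = 8 * q 0 := by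
  rw [pd_eq (f := fun p : Fin 2 → ℝ => 8 * p 0 * p 1) (((hasF_coord 0 q).const_mul 8).mul (hasF_coord 1 q))]
  simp [pr, Pi.single_apply]

lemma hasF_G11 (q : Fin 2 → ℝ) :
    HasFDerivAt (fun p : Fin 2 → ℝ => 8 * (p 0) ^ 2)
      (((8 * q 0) • pr 0) + (q 0 • ((8:ℝ) • pr 0))) q := by
  have hfe : (fun p : Fin 2 → ℝ => 8 * (p 0) ^ 2) = fun p => (8 * p 0) * p 0 := by
    funext p; ring
  rw [hfe]
  exact ((hasF_coord 0 q).const_mul 8).mul (hasF_coord 0 q)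

lemma pd_G11_0 (q : Fin 2 → ℝ) : pd (fun p : Fin 2 → ℝ => 8 * (p 0) ^ 2) 0 q = 16 * q 0 := by
  rw [pd_eq (hasF_G11 q)]; simp [pr, Pi.single_apply]; ring

lemma pd_G11_1 (q : Fin 2 → ℝ) : pd (fun p : Fin 2 → ℝ => 8 * (p 0) ^ 2) 1 q = 0 := by
  rw [pd_eq (hasF_G11 q)]; simp [pr, Pi.single_apply]

lemma pd_negx_0 (q : Fin 2 → ℝ) : pd (fun p : Fin 2 → ℝ => -(p 0)) 0 q = -1 := by
  rw [pd_eq (f := fun p : Fin 2 → ℝ => -(p 0)) ((hasF_coord 0 q).neg)]; simp [pr, Pi.single_apply]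

lemma pd_negx_1 (q : Fin 2 → ℝ) : pd (fun p : Fin 2 → ℝ => -(p 0)) 1 q = 0 := by
  rw [pd_eq (f := fun p : Fin 2 → ℝ => -(p 0)) ((hasF_coord 0 q).neg)]; simp [pr, Pi.single_apply]

lemma pd_y_0 (q : Fin 2 → ℝ) : pd (fun p : Fin 2 → ℝ => p 1) 0 q = 0 := by
  rw [pd_eq (hasF_coord 1 q)]; simp [pr, Pi.single_apply]

lemma pd_y_1 (q : Fin 2 → ℝ) : pd (fun p : Fin 2 → ℝ => p 1) 1 q = 1 := by
  rw [pd_eq (hasF_coord 1 q)]; simp [pr, Pi.single_apply]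

lemma hasF_xi2 (q : Fin 2 → ℝ) (hb : q 1 ≠ 0) :
    HasFDerivAt (fun p : Fin 2 → ℝ => -(p 0) / (2 * p 1))
      (((2 * q 1)⁻¹ • (-(pr 0))) + ((-(q 0)) • ((-(((2:ℝ) * q 1) ^ 2)⁻¹) • ((2:ℝ) • pr 1)))) q := by
  have h2 : (2 : ℝ) * q 1 ≠ 0 := by simp [hb]
  have hfe : (fun p : Fin 2 → ℝ => -(p 0) / (2 * p 1))
      = fun p => -(p 0) * (fun x : ℝ => x⁻¹) (2 * p 1) := by
    funext p; simp [div_eq_mul_inv]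
  have hinv : HasFDerivAt (fun p : Fin 2 → ℝ => (fun x : ℝ => x⁻¹) (2 * p 1))
      ((-(((2:ℝ) * q 1) ^ 2)⁻¹) • ((2:ℝ) • pr 1)) q :=
    (hasDerivAt_inv h2).comp_hasFDerivAt q ((hasF_coord 1 q).const_mul 2)
  rw [hfe]
  have : HasFDerivAt (fun p : Fin 2 → ℝ => -(p 0) * (fun x : ℝ => x⁻¹) (2 * p 1))
      ((-(q 0)) • ((-(((2:ℝ) * q 1) ^ 2)⁻¹) • ((2:ℝ) • pr 1)) + (2 * q 1)⁻¹ • (-(pr 0))) q :=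
    ((hasF_coord 0 q).neg).mul hinv
  convert this using 1
  abel

lemma pd_xi2_0 (q : Fin 2 → ℝ) (hb : q 1 ≠ 0) :
    pd (fun p : Fin 2 → ℝ => -(p 0) / (2 * p 1)) 0 q = -(2 * q 1)⁻¹ := by
  rw [pd_eq (hasF_xi2 q hb)]; simp [pr, Pi.single_apply]

lemma pd_xi2_1 (q : Fin 2 → ℝ) (hb : q 1 ≠ 0) :
    pd (fun p : Fin 2 → ℝ => -(p 0) / (2 * p 1)) 1 q = q 0 / (2 * (q 1) ^ 2) := by
  rw [pd_eq (hasF_xi2 q hb)]; simp [pr, Pi.single_apply]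
  field_simp

lemma hasF_xi3 (q : Fin 2 → ℝ) (ha : q 0 ≠ 0) (hb : q 1 ≠ 0) :
    HasFDerivAt (fun p : Fin 2 → ℝ => 1 / (p 0 * p 1))
      ((-((q 0 * q 1) ^ 2)⁻¹) • ((q 0 • pr 1) + (q 1 • pr 0))) q := by
  have hab : q 0 * q 1 ≠ 0 := mul_ne_zero ha hb
  have hfe : (fun p : Fin 2 → ℝ => 1 / (p 0 * p 1))
      = fun p => (fun x : ℝ => x⁻¹) (p 0 * p 1) := by
    funext p; simp
  rw [hfe]
  exact (hasDerivAt_inv hab).comp_hasFDerivAt q ((hasF_coord 0 q).mul (hasF_coord 1 q))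

lemma pd_xi3_0 (q : Fin 2 → ℝ) (ha : q 0 ≠ 0) (hb : q 1 ≠ 0) :
    pd (fun p : Fin 2 → ℝ => 1 / (p 0 * p 1)) 0 q = -(q 1 / (q 0 * q 1) ^ 2) := by
  rw [pd_eq (hasF_xi3 q ha hb)]; simp [pr, Pi.single_apply]
  field_simp

lemma pd_xi3_1 (q : Fin 2 → ℝ) (ha : q 0 ≠ 0) (hb : q 1 ≠ 0) :
    pd (fun p : Fin 2 → ℝ => 1 / (p 0 * p 1)) 1 q = -(q 0 / (q 0 * q 1) ^ 2) := by
  rw [pd_eq (hasF_xi3 q ha hb)]; simp [pr, Pi.single_apply]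
  field_simp

lemma hasF_h (q : Fin 2 → ℝ) :
    HasFDerivAt (fun p : Fin 2 → ℝ => p 0 / 2) (((2:ℝ)⁻¹) • pr 0) q := by
  have hfe : (fun p : Fin 2 → ℝ => p 0 / 2) = fun p => (2:ℝ)⁻¹ * p 0 := by
    funext p; ring
  rw [hfe]
  exact (hasF_coord 0 q).const_mul _

lemma pd_h_0 (q : Fin 2 → ℝ) : pd (fun p : Fin 2 → ℝ => p 0 / 2) 0 q = 1 / 2 := by
  rw [pd_eq (hasF_h q)]; simp [pr, Pi.single_apply]

lemma pd_h_1 (q : Fin 2 → ℝ) : pd (fun p : Fin 2 → ℝ => p 0 / 2) 1 q = 0 := by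
  rw [pd_eq (hasF_h q)]; simp [pr, Pi.single_apply]

/-- the vector fields `ξ₁ = (−a, b)`, `ξ₂ = (−a/(2b), 1)`, `ξ₃ = (1/(ab), 0)`
are Killing fields of the scaled Kantowski–Sachs supermetric on `{a > 0, b > 0}`, and
`h = (a/2, 0)` is a homothetic field with `£_h Ḡ = Ḡ`. -/
theorem kantowski_sachs_killing_and_homothetic_fields :
    (∀ q : Fin 2 → ℝ, 0 < q 0 → 0 < q 1 → ∀ μ ν,
      lieG (fun p => ![-(p 0), p 1]) ksMetric q μ ν = 0)
    ∧ (∀ q : Fin 2 → ℝ, 0 < q 0 → 0 < q 1 → ∀ μ ν,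
      lieG (fun p => ![-(p 0) / (2 * p 1), 1]) ksMetric q μ ν = 0)
    ∧ (∀ q : Fin 2 → ℝ, 0 < q 0 → 0 < q 1 → ∀ μ ν,
      lieG (fun p => ![1 / (p 0 * p 1), 0]) ksMetric q μ ν = 0)
    ∧ (∀ q : Fin 2 → ℝ, 0 < q 0 → 0 < q 1 → ∀ μ ν,
      lieG (fun p => ![p 0 / 2, 0]) ksMetric q μ ν = ksMetric q μ ν) := by
  refine ⟨?_, ?_, ?_, ?_⟩ <;> intro q ha hb μ ν <;>
    have ha' : q 0 ≠ 0 := ne_of_gt ha <;>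
    have hb' : q 1 ≠ 0 := ne_of_gt hb <;>
    fin_cases μ <;> fin_cases ν <;>
    simp only [lieG, Fin.sum_univ_two, ksMetric, Fin.isValue, Fin.zero_eta, Fin.mk_one,
      Matrix.cons_val_zero, Matrix.cons_val_one, Matrix.head_cons,
      pd_const, pd_G01_0 q, pd_G01_1 q, pd_G11_0 q, pd_G11_1 q,
      pd_negx_0 q, pd_negx_1 q, pd_y_0 q, pd_y_1 q,
      pd_xi2_0 q hb', pd_xi2_1 q hb',
      pd_xi3_0 q ha' hb', pd_xi3_1 q ha' hb',
      pd_h_0 q, pd_h_1 q] <;>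
    field_simp <;> ring
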